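/- There exists a family B of 2λ+1 (s,t)-flows of G such that for every edge e ∈ E, B contains a flow f with f(e) = 0 whose value equals the maximum (s,t)-flow value of G − e; in other words, for every edge e the family B contains a maximum (s,t)-flow of the graph G − e. -/

import Mathlib

open Finset

/-- A finite directed multigraph on vertex type `V` with edge type `E`:
each edge `e` has a source `src e` and a target `tgt e`. -/
structure Digraph' (V E : Type) where
  src : E → V
  tgt : E → V

namespace Digraph'

variable {V E : Type} [Fintype V] [DecidableEq V] [Fintype E] [DecidableEq E]

/-- `h : E → ℕ` satisfies flow conservation at every vertex other than `s` and `t`: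
the sum over incoming edges equals the sum over outgoing edges. -/
def Conserves (G : Digraph' V E) (s t : V) (h : E → ℕ) : Prop :=
  ∀ v : V, v ≠ s → v ≠ t →
    ∑ e ∈ univ.filter (fun e => G.tgt e = v), h e =
      ∑ e ∈ univ.filter (fun e => G.src e = v), h e

/-- The value of `h`: the net flow out of `s`. -/
def flowValue (G : Digraph' V E) (s : V) (h : E → ℕ) : ℤ :=
  (∑ e ∈ univ.filter (fun e => G.src e = s), (h e : ℤ)) -
    ∑ e ∈ univ.filter (fun e => G.tgt e = s), (h e : ℤ)

/-- An `(s,t)`-flow of a unit-capacity digraph: a `{0,1}`-valued function on edges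
satisfying flow conservation at every vertex other than `s` and `t`. -/
def IsFlow (G : Digraph' V E) (s t : V) (f : E → ℕ) : Prop :=
  (∀ e, f e ≤ 1) ∧ G.Conserves s t f

/-- One step along an edge not belonging to `F`. -/
def stepAvoid (G : Digraph' V E) (F : Finset E) (u v : V) : Prop :=
  ∃ e, e ∉ F ∧ G.src e = u ∧ G.tgt e = v

/-- Reachability by a directed path using no edge of `F`. -/
def ReachAvoid (G : Digraph' V E) (F : Finset E) : V → V → Prop :=
  Relation.ReflTransGen (G.stepAvoid F)

/-- `C` is an `(s,t)`-cut: after deleting the edges of `C` there is no directed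
path from `s` to `t`. -/
def IsCut (G : Digraph' V E) (s t : V) (C : Finset E) : Prop :=
  ¬ G.ReachAvoid C s t

/-- An `(s,t)`-min-cut: an `(s,t)`-cut of minimum cardinality. -/
def IsMinCut (G : Digraph' V E) (s t : V) (C : Finset E) : Prop :=
  G.IsCut s t C ∧ ∀ C' : Finset E, G.IsCut s t C' → C.card ≤ C'.card

/-- A minimal `(s,t)`-cut: no proper subset of it is an `(s,t)`-cut. -/
def IsMinimalCut (G : Digraph' V E) (s t : V) (C : Finset E) : Prop :=
  G.IsCut s t C ∧ ∀ C' : Finset E, C' ⊂ C → ¬ G.IsCut s t C'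

/-- An edge is critical if it belongs to some `(s,t)`-min-cut. -/
def Critical (G : Digraph' V E) (s t : V) (e : E) : Prop :=
  ∃ C : Finset E, G.IsMinCut s t C ∧ e ∈ C

/-- `m` is the maximum `(s,t)`-flow value of `G − F`, i.e. the largest value of an
`(s,t)`-flow of `G` vanishing on every edge of `F`. -/
def IsMaxFlowValue (G : Digraph' V E) (s t : V) (F : Finset E) (m : ℤ) : Prop :=
  (∃ f, G.IsFlow s t f ∧ (∀ e ∈ F, f e = 0) ∧ G.flowValue s f = m) ∧
    ∀ f, G.IsFlow s t f → (∀ e ∈ F, f e = 0) → G.flowValue s f ≤ m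

/-- The residual graph `G_f` of a `{0,1}`-flow `f`: each edge with `f e = 1`
is reversed, each edge with `f e = 0` is kept as is. -/
def residual (G : Digraph' V E) (f : E → ℕ) : Digraph' V E where
  src e := if f e = 1 then G.tgt e else G.src e
  tgt e := if f e = 1 then G.src e else G.tgt e

end Digraph'

set_option linter.unusedSectionVars false
set_option linter.unusedVariables false
set_option maxHeartbeats 1000000



namespace Digraph'

variable {V E : Type} [Fintype V] [DecidableEq V] [Fintype E] [DecidableEq E]

/-- excess (net outflow) of `f` at a vertex. -/
def exc (G : Digraph' V E) (f : E → ℕ) (v : V) : ℤ :=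
  (∑ e ∈ univ.filter (fun e => G.src e = v), (f e : ℤ)) -
    ∑ e ∈ univ.filter (fun e => G.tgt e = v), (f e : ℤ)

lemma flowValue_eq_exc (G : Digraph' V E) (s : V) (f : E → ℕ) :
    G.flowValue s f = G.exc f s := rfl

/-- conservation (excess form) -/
def Cons (G : Digraph' V E) (s t : V) (f : E → ℕ) : Prop :=
  ∀ v, v ≠ s → v ≠ t → G.exc f v = 0

lemma conserves_iff_cons {G : Digraph' V E} {s t : V} {f : E → ℕ} :
    G.Conserves s t f ↔ G.Cons s t f := by
  unfold Conserves Cons exc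
  refine forall_congr' fun v => forall_congr' fun _ => forall_congr' fun _ => ?_
  rw [sub_eq_zero]
  constructor
  · intro h; exact_mod_cast h.symm
  · intro h; exact_mod_cast h.symm

lemma exc_add (G : Digraph' V E) (f g : E → ℕ) (v : V) :
    G.exc (fun e => f e + g e) v = G.exc f v + G.exc g v := by
  unfold exc
  push_cast
  rw [Finset.sum_add_distrib, Finset.sum_add_distrib]
  ring

lemma exc_sub (G : Digraph' V E) {f g : E → ℕ} (hf : ∀ e, g e ≤ f e) (v : V) :
    G.exc (fun e => f e - g e) v = G.exc f v - G.exc g v := by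
  unfold exc
  have : ∀ e : E, ((f e - g e : ℕ) : ℤ) = (f e : ℤ) - (g e : ℤ) := fun e => by
    have := hf e; push_cast [Nat.cast_sub this]; ring
  simp only [this]
  rw [Finset.sum_sub_distrib, Finset.sum_sub_distrib]
  ring

lemma exc_zero (G : Digraph' V E) (v : V) : G.exc (fun _ => 0) v = 0 := by
  simp [exc]

def outS (G : Digraph' V E) (S : Finset V) : Finset E :=
  univ.filter (fun e => G.src e ∈ S ∧ G.tgt e ∉ S)

def inS (G : Digraph' V E) (S : Finset V) : Finset E :=
  univ.filter (fun e => G.tgt e ∈ S ∧ G.src e ∉ S)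

lemma sum_fiber (G : Digraph' V E) (f : E → ℕ) (S : Finset V) (g : E → V) :
    ∑ v ∈ S, ∑ e ∈ univ.filter (fun e => g e = v), (f e : ℤ)
      = ∑ e ∈ univ.filter (fun e => g e ∈ S), (f e : ℤ) := by
  calc ∑ v ∈ S, ∑ e ∈ univ.filter (fun e => g e = v), (f e : ℤ)
      = ∑ v ∈ S, ∑ e ∈ univ, if g e = v then (f e : ℤ) else 0 := by
        exact Finset.sum_congr rfl fun v _ => Finset.sum_filter _ _
    _ = ∑ e ∈ univ, ∑ v ∈ S, if g e = v then (f e : ℤ) else 0 := Finset.sum_comm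
    _ = ∑ e ∈ univ, if g e ∈ S then (f e : ℤ) else 0 := by
        exact Finset.sum_congr rfl fun e _ => Finset.sum_ite_eq S (g e) (fun _ => (f e : ℤ))
    _ = ∑ e ∈ univ.filter (fun e => g e ∈ S), (f e : ℤ) := (Finset.sum_filter _ _).symm

/-- Summation of excess over a vertex set equals net flow across the boundary. -/
lemma sum_exc (G : Digraph' V E) (f : E → ℕ) (S : Finset V) :
    ∑ v ∈ S, G.exc f v =
      (∑ e ∈ G.outS S, (f e : ℤ)) - ∑ e ∈ G.inS S, (f e : ℤ) := by
  unfold exc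
  rw [Finset.sum_sub_distrib, G.sum_fiber f S (G.src), G.sum_fiber f S (G.tgt)]
  have h2 : ∑ e ∈ univ.filter (fun e => G.src e ∈ S), (f e : ℤ)
      = (∑ e ∈ univ.filter (fun e => G.src e ∈ S ∧ G.tgt e ∈ S), (f e : ℤ))
        + ∑ e ∈ G.outS S, (f e : ℤ) := by
    rw [← Finset.sum_filter_add_sum_filter_not (univ.filter (fun e => G.src e ∈ S))
      (fun e => G.tgt e ∈ S)]
    congr 1
    · congr 1; ext e; simp only [Finset.mem_filter, Finset.mem_univ, true_and]
      try tauto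
    · unfold outS; congr 1; ext e
      simp only [Finset.mem_filter, Finset.mem_univ, true_and]
      try tauto
  have h3 : ∑ e ∈ univ.filter (fun e => G.tgt e ∈ S), (f e : ℤ)
      = (∑ e ∈ univ.filter (fun e => G.src e ∈ S ∧ G.tgt e ∈ S), (f e : ℤ))
        + ∑ e ∈ G.inS S, (f e : ℤ) := by
    rw [← Finset.sum_filter_add_sum_filter_not (univ.filter (fun e => G.tgt e ∈ S))
      (fun e => G.src e ∈ S)]
    congr 1
    · congr 1; ext e; simp only [Finset.mem_filter, Finset.mem_univ, true_and]
      try tauto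
    · unfold inS; congr 1; ext e
      simp only [Finset.mem_filter, Finset.mem_univ, true_and]
      try tauto
  rw [h2, h3]; ring

lemma sum_exc_univ (G : Digraph' V E) (f : E → ℕ) :
    ∑ v ∈ univ, G.exc f v = 0 := by
  rw [G.sum_exc f univ]
  have h1 : G.outS univ = ∅ := by unfold outS; ext e; simp
  have h2 : G.inS univ = ∅ := by unfold inS; ext e; simp
  simp [h1, h2]

/-- If a set is closed for `s,t` (contains both or neither), total excess over it vanishes
for conserving functions. -/
lemma sum_exc_closed (G : Digraph' V E) {s t : V} {f : E → ℕ} (hf : G.Cons s t f)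
    {S : Finset V} (hST : s ∈ S ↔ t ∈ S) :
    ∑ v ∈ S, G.exc f v = 0 := by
  by_cases hs : s ∈ S
  · have ht : t ∈ S := hST.mp hs
    have h1 : ∑ v ∈ univ, G.exc f v = ∑ v ∈ S, G.exc f v + ∑ v ∈ Sᶜ, G.exc f v :=
      (Finset.sum_add_sum_compl S _).symm
    have h2 : ∑ v ∈ Sᶜ, G.exc f v = 0 := by
      refine Finset.sum_eq_zero fun v hv => ?_
      rw [Finset.mem_compl] at hv
      exact hf v (fun h => hv (h ▸ hs)) (fun h => hv (h ▸ ht))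
    rw [G.sum_exc_univ f] at h1
    linarith
  · refine Finset.sum_eq_zero fun v hv => ?_
    exact hf v (fun h => hs (h ▸ hv)) (fun h => (hST.mpr (h ▸ hv) |> hs))

lemma sum_exc_st (G : Digraph' V E) {s t : V} {f : E → ℕ} (hf : G.Cons s t f)
    {S : Finset V} (hs : s ∈ S) (ht : t ∉ S) :
    ∑ v ∈ S, G.exc f v = G.exc f s := by
  refine Finset.sum_eq_single_of_mem s hs fun v hv hvs => ?_
  exact hf v hvs (fun h => ht (h ▸ hv))


/-- indicator function of an edge set -/
def ind (F : Finset E) : E → ℕ := fun e => if e ∈ F then 1 else 0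

lemma ite_eq_comm (v w : V) : (if w = v then (1:ℤ) else 0) = (if v = w then 1 else 0) := by
  by_cases h : v = w
  · subst h; simp
  · rw [if_neg h, if_neg (fun hh => h hh.symm)]

lemma exc_single (G : Digraph' V E) (e : E) (v : V) :
    G.exc (ind {e}) v = (if G.src e = v then 1 else 0) - (if G.tgt e = v then 1 else 0) := by
  have h : ∀ g : E → V, (∑ e' ∈ univ.filter (fun e' => g e' = v), ((ind {e} e' : ℕ) : ℤ))
      = if g e = v then 1 else 0 := by
    intro g
    have h2 : ∀ e' : E, ((ind {e} e' : ℕ) : ℤ) = if e' = e then (1:ℤ) else 0 := by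
      intro e'; by_cases h : e' = e <;> simp [ind, h]
    simp only [h2]
    rw [Finset.sum_ite_eq' (univ.filter (fun e' => g e' = v)) e (fun _ => (1:ℤ))]
    simp
  unfold exc
  rw [h (G.src), h (G.tgt)]

lemma ind_insert (F : Finset E) (e : E) (he : e ∉ F) :
    ind (insert e F) = fun e' => ind F e' + ind {e} e' := by
  funext e'
  unfold ind
  by_cases h1 : e' = e
  · subst h1; simp [he]
  · simp [h1, Finset.mem_insert]

/-- net excess change caused by increasing on F and decreasing on G' -/
def netZ (G : Digraph' V E) (F G' : Finset E) (v : V) : ℤ :=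
  G.exc (ind F) v - G.exc (ind G') v

/-- one step forward along B or backward along A -/
def StepRel (G : Digraph' V E) (A B : Finset E) (u v : V) : Prop :=
  (∃ e ∈ B, G.src e = u ∧ G.tgt e = v) ∨ (∃ e ∈ A, G.src e = v ∧ G.tgt e = u)

/-- nodup chains witnessing reflexive-transitive closure -/
lemma exists_nodup_chain {α : Type} {r : α → α → Prop} {a b : α}
    (h : Relation.ReflTransGen r a b) :
    ∃ l : List α, l.Chain' r ∧ l.head? = some a ∧ l.getLast? = some b ∧ l.Nodup := by
  classical
  induction h with
  | refl => exact ⟨[a], List.isChain_singleton _, rfl, rfl, by simp⟩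
  | @tail b c hab hbc ih =>
    obtain ⟨l, hc, hh, hl, hnd⟩ := ih
    have hlne : l ≠ [] := by rintro rfl; simp at hh
    by_cases hcl : c ∈ l
    · obtain ⟨l1, l2, rfl⟩ := List.append_of_mem hcl
      refine ⟨l1 ++ [c], ?_, ?_, ?_, ?_⟩
      · have : (l1 ++ [c]) <+: (l1 ++ c :: l2) := ⟨l2, by simp⟩
        exact hc.prefix this
      · rcases l1 with _ | ⟨x, l1'⟩
        · simpa using hh
        · simpa using hh
      · simp [List.getLast?_append]
      · refine hnd.sublist ?_
        exact (List.singleton_sublist.mpr (List.mem_cons_self (a := c) (l := l2))).append_left l1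
    · refine ⟨l ++ [c], ?_, ?_, ?_, ?_⟩
      · refine List.IsChain.append hc (List.isChain_singleton _) ?_
        intro x hx y hy
        rw [hl] at hx
        simp at hx hy
        subst hx; subst hy; exact hbc
      · rcases l with _ | ⟨x, l'⟩
        · simp at hh
        · simpa using hh
      · simp [List.getLast?_append]
      · rw [List.nodup_append]
        exact ⟨hnd, by simp, by simp [hcl, List.disjoint_singleton]; exact fun a ha h => hcl (h ▸ ha)⟩

lemma getLast?_mem {α : Type} {l : List α} {b : α} (h : l.getLast? = some b) : b ∈ l := by
  rcases l with _ | ⟨x, l'⟩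
  · simp at h
  · rw [List.getLast?_eq_getLast (l := x :: l') (by simp)] at h
    have h2 := List.getLast_mem (l := x :: l') (by simp)
    rwa [Option.some_inj.mp h] at h2

/-- Extract an adjustment (augmenting path) from a nodup chain. -/
lemma adj_of_chain (G : Digraph' V E) (A B : Finset E) :
    ∀ l : List V, l.Chain' (G.StepRel A B) → l.Nodup → ∀ a b : V,
      l.head? = some a → l.getLast? = some b →
    ∃ F G' : Finset E, F ⊆ B ∧ G' ⊆ A ∧ Disjoint F G' ∧
      (∀ e ∈ F, G.src e ∈ l ∧ G.tgt e ∈ l) ∧ (∀ e ∈ G', G.src e ∈ l ∧ G.tgt e ∈ l) ∧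
      ∀ v, G.netZ F G' v = (if v = a then 1 else 0) - (if v = b then 1 else 0) := by
  intro l
  induction l with
  | nil => intro _ _ a b h1 _; simp at h1
  | cons x l ih =>
    intro hch hnd a b hh hl
    have hax : a = x := by simpa using hh.symm
    subst hax
    rcases l with _ | ⟨y, l'⟩
    · have hab : b = a := by simpa using hl.symm
      subst hab
      exact ⟨∅, ∅, by simp, by simp, by simp, by simp, by simp,
        fun v => by simp [netZ, ind, exc_zero, exc]⟩
    · have hst : G.StepRel A B a y := (List.isChain_cons_cons.mp hch).1
      have hch' : (y :: l').Chain' (G.StepRel A B) := (List.isChain_cons_cons.mp hch).2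
      have hnd' : (y :: l').Nodup := hnd.of_cons
      have hna : a ∉ (y :: l') := (List.nodup_cons.mp hnd).1
      have hlb : (y :: l').getLast? = some b := by
        rw [← hl]; simp [List.getLast?_cons_cons]
      obtain ⟨F, G', hFB, hGA, hdis, hFm, hGm, hnet⟩ :=
        ih hch' hnd' y b rfl hlb
      rcases hst with ⟨e, heB, hes, het⟩ | ⟨e, heA, hes, het⟩
      · -- forward edge a → y, add to F
        have heF : e ∉ F := fun h => hna (hes ▸ (hFm e h).1)
        have heG : e ∉ G' := fun h => hna (hes ▸ (hGm e h).1)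
        refine ⟨insert e F, G', ?_, hGA, ?_, ?_, ?_, ?_⟩
        · exact Finset.insert_subset heB hFB
        · exact Finset.disjoint_insert_left.mpr ⟨heG, hdis⟩
        · intro e' he'
          rcases Finset.mem_insert.mp he' with rfl | he'
          · exact ⟨by rw [hes]; exact List.mem_cons_self,
              by rw [het]; exact List.mem_cons_of_mem _ (List.mem_cons_self)⟩
          · exact ⟨List.mem_cons_of_mem _ (hFm e' he').1, List.mem_cons_of_mem _ (hFm e' he').2⟩
        · intro e' he'
          exact ⟨List.mem_cons_of_mem _ (hGm e' he').1, List.mem_cons_of_mem _ (hGm e' he').2⟩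
        · intro v
          have h1 : G.netZ (insert e F) G' v = G.netZ F G' v + G.exc (ind {e}) v := by
            unfold netZ
            rw [ind_insert F e heF, G.exc_add]
            ring
          rw [h1, hnet v, G.exc_single, hes, het]
          rw [ite_eq_comm v a, ite_eq_comm v y]
          ring
      · -- backward edge, add to G' ; edge e has src = y? no: src e = v-side...
        have heF : e ∉ F := fun h => hna (het ▸ (hFm e h).2)
        have heG : e ∉ G' := fun h => hna (het ▸ (hGm e h).2)
        refine ⟨F, insert e G', hFB, ?_, ?_, ?_, ?_, ?_⟩
        · exact Finset.insert_subset heA hGA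
        · exact Finset.disjoint_insert_right.mpr ⟨heF, hdis⟩
        · intro e' he'
          exact ⟨List.mem_cons_of_mem _ (hFm e' he').1, List.mem_cons_of_mem _ (hFm e' he').2⟩
        · intro e' he'
          rcases Finset.mem_insert.mp he' with rfl | he'
          · exact ⟨by rw [hes]; exact List.mem_cons_of_mem _ (List.mem_cons_self),
              by rw [het]; exact List.mem_cons_self⟩
          · exact ⟨List.mem_cons_of_mem _ (hGm e' he').1, List.mem_cons_of_mem _ (hGm e' he').2⟩
        · intro v
          have h1 : G.netZ F (insert e G') v = G.netZ F G' v - G.exc (ind {e}) v := by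
            unfold netZ
            rw [ind_insert G' e heG, G.exc_add]
            ring
          rw [h1, hnet v, G.exc_single, hes, het]
          rw [ite_eq_comm v y, ite_eq_comm v a]
          ring
      

lemma exc_adjust (G : Digraph' V E) (φ : E → ℕ) (F G' : Finset E)
    (hG : ∀ e ∈ G', 1 ≤ φ e) (hFG : Disjoint F G') (v : V) :
    G.exc (fun e => φ e + ind F e - ind G' e) v = G.exc φ v + G.netZ F G' v := by
  have hle : ∀ e, ind G' e ≤ φ e + ind F e := by
    intro e
    by_cases h : e ∈ G'
    · have := hG e h; simp [ind, h]; omega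
    · simp [ind, h]
  rw [G.exc_sub hle, G.exc_add]
  unfold netZ
  ring

/-- step relation with free teleports between s and t -/
def Step2 (G : Digraph' V E) (s t : V) (A B : Finset E) (u v : V) : Prop :=
  G.StepRel A B u v ∨ ((u = s ∨ u = t) ∧ (v = s ∨ v = t))

/-- a nodup Step2 chain is a Step chain or two Step chains joined by one teleport -/
lemma step2_chain_split (G : Digraph' V E) (s t : V) (A B : Finset E) :
    ∀ l : List V, l.Chain' (G.Step2 s t A B) → l.Nodup →
      l.Chain' (G.StepRel A B) ∨
      ∃ l1 l2 : List V, l = l1 ++ l2 ∧ l1 ≠ [] ∧ l2 ≠ [] ∧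
        l1.Chain' (G.StepRel A B) ∧ l2.Chain' (G.StepRel A B) ∧
        (∀ x ∈ l1.getLast?, (x = s ∨ x = t)) ∧ (∀ y ∈ l2.head?, (y = s ∨ y = t)) := by
  intro l
  induction l with
  | nil => intro _ _; left; exact List.isChain_nil
  | cons x l ih =>
    intro hch hnd
    rcases l with _ | ⟨y, l'⟩
    · left; exact List.isChain_singleton _
    · have h1 : G.Step2 s t A B x y := (List.isChain_cons_cons.mp hch).1
      have hch' : (y :: l').Chain' (G.Step2 s t A B) := (List.isChain_cons_cons.mp hch).2
      have hnd' : (y :: l').Nodup := hnd.of_cons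
      have hx : x ∉ (y :: l') := (List.nodup_cons.mp hnd).1
      rcases ih hch' hnd' with hc | ⟨l1, l2, heq, hl1, hl2, hc1, hc2, hlast, hhead⟩
      · rcases h1 with hstep | htel
        · left; exact List.isChain_cons_cons.mpr ⟨hstep, hc⟩
        · right
          exact ⟨[x], y :: l', rfl, by simp, by simp, List.isChain_singleton _, hc,
            by simpa using htel.1, by simpa using htel.2⟩
      · rcases h1 with hstep | htel
        · right
          rcases l1 with _ | ⟨z, l1'⟩
          · exact absurd rfl hl1
          · have hz : y = z := by
              have h := congrArg List.head? heq
              simpa using h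
            refine ⟨x :: z :: l1', l2, by rw [show x :: y :: l' = x :: (y :: l') from rfl, heq]; rfl,
              by simp, hl2, ?_, hc2, ?_, hhead⟩
            · exact List.isChain_cons_cons.mpr ⟨hz ▸ hstep, hc1⟩
            · intro w hw
              refine hlast w ?_
              simpa [List.getLast?_cons_cons] using hw
        · exfalso
          have hxy : x ≠ y := fun h => hx (h ▸ List.mem_cons_self)
          obtain ⟨z, hz⟩ : ∃ z, l1.getLast? = some z := by
            rcases l1 with _ | ⟨u, l1'⟩
            · exact absurd rfl hl1
            · exact ⟨_, List.getLast?_eq_getLast (by simp)⟩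
          obtain ⟨w, hw⟩ : ∃ w, l2.head? = some w := by
            rcases l2 with _ | ⟨u, l2'⟩
            · exact absurd rfl hl2
            · exact ⟨u, rfl⟩
          have hzst := hlast z hz
          have hwst := hhead w hw
          have hzmem : z ∈ l1 := getLast?_mem hz
          have hwmem : w ∈ l2 := by
            rcases l2 with _ | ⟨u, l2'⟩
            · exact absurd rfl hl2
            · simp at hw; subst hw; exact List.mem_cons_self
          have hndl : (l1 ++ l2).Nodup := heq ▸ hnd'
          have hdisj : ∀ a, a ∈ l1 → a ∈ l2 → False := by
            intro a ha1 ha2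
            exact (List.disjoint_of_nodup_append hndl) ha1 ha2
          have hxm : ∀ a, a ∈ l1 ++ l2 → a ≠ x := by
            intro a ha h; exact hx (h ▸ (heq ▸ ha))
          have hzx : z ≠ x := hxm z (List.mem_append_left l2 hzmem)
          have hwx : w ≠ x := hxm w (List.mem_append_right l1 hwmem)
          have hzy : z = y := by
            rcases htel.1 with rfl | rfl <;> rcases htel.2 with rfl | rfl <;>
              rcases hzst with rfl | rfl <;> tauto
          have hwy : w = y := by
            rcases htel.1 with rfl | rfl <;> rcases htel.2 with rfl | rfl <;>
              rcases hwst with rfl | rfl <;> tauto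
          exact hdisj y (hzy ▸ hzmem) (hwy ▸ hwmem)


lemma ind_union (F1 F2 : Finset E) (h : Disjoint F1 F2) :
    ind (F1 ∪ F2) = fun e => ind F1 e + ind F2 e := by
  funext e
  unfold ind
  by_cases h1 : e ∈ F1
  · have h2 : e ∉ F2 := Finset.disjoint_left.mp h h1
    simp [h1, h2]
  · by_cases h2 : e ∈ F2 <;> simp [h1, h2]

lemma netZ_union (G : Digraph' V E) (F1 F2 G1 G2 : Finset E)
    (hF : Disjoint F1 F2) (hG : Disjoint G1 G2) (v : V) :
    G.netZ (F1 ∪ F2) (G1 ∪ G2) v = G.netZ F1 G1 v + G.netZ F2 G2 v := by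
  unfold netZ
  rw [ind_union F1 F2 hF, ind_union G1 G2 hG, G.exc_add, G.exc_add]
  ring

/-- Plain reachability dichotomy: an augmenting adjustment or a closed cut set. -/
lemma reach_or_cut (G : Digraph' V E) (A B : Finset E) (p q : V) :
    (∃ F G' : Finset E, F ⊆ B ∧ G' ⊆ A ∧ Disjoint F G' ∧
      ∀ v, G.netZ F G' v = (if v = p then 1 else 0) - (if v = q then 1 else 0)) ∨
    (∃ S : Finset V, p ∈ S ∧ q ∉ S ∧
      (∀ e ∈ B, G.src e ∈ S → G.tgt e ∈ S) ∧ (∀ e ∈ A, G.tgt e ∈ S → G.src e ∈ S)) := by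
  classical
  by_cases hr : Relation.ReflTransGen (G.StepRel A B) p q
  · left
    obtain ⟨l, hc, hh, hl, hnd⟩ := exists_nodup_chain hr
    obtain ⟨F, G', h1, h2, h3, _, _, h6⟩ := G.adj_of_chain A B l hc hnd p q hh hl
    exact ⟨F, G', h1, h2, h3, h6⟩
  · right
    refine ⟨univ.filter (fun v => Relation.ReflTransGen (G.StepRel A B) p v),
      Finset.mem_filter.mpr ⟨Finset.mem_univ _, Relation.ReflTransGen.refl⟩,
      by simp only [Finset.mem_filter, Finset.mem_univ, true_and]; exact hr, ?_, ?_⟩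
    · intro e heB hs
      simp only [Finset.mem_filter, Finset.mem_univ, true_and] at hs ⊢
      exact hs.tail (Or.inl ⟨e, heB, rfl, rfl⟩)
    · intro e heA ht
      simp only [Finset.mem_filter, Finset.mem_univ, true_and] at ht ⊢
      exact ht.tail (Or.inr ⟨e, heA, rfl, rfl⟩)

/-- Teleport reachability dichotomy. -/
lemma reach2_or_cut (G : Digraph' V E) (s t : V) (A B : Finset E) (p q : V) :
    (∃ F G' : Finset E, F ⊆ B ∧ G' ⊆ A ∧ Disjoint F G' ∧
      ∀ v, v ≠ s → v ≠ t →
        G.netZ F G' v = (if v = p then 1 else 0) - (if v = q then 1 else 0)) ∨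
    (∃ S : Finset V, p ∈ S ∧ q ∉ S ∧ (s ∈ S ↔ t ∈ S) ∧
      (∀ e ∈ B, G.src e ∈ S → G.tgt e ∈ S) ∧ (∀ e ∈ A, G.tgt e ∈ S → G.src e ∈ S)) := by
  classical
  by_cases hr : Relation.ReflTransGen (G.Step2 s t A B) p q
  · left
    obtain ⟨l, hc, hh, hl, hnd⟩ := exists_nodup_chain hr
    rcases G.step2_chain_split s t A B l hc hnd with hc' | ⟨l1, l2, heq, hl1, hl2, hc1, hc2, hlast, hhead⟩
    · obtain ⟨F, G', h1, h2, h3, _, _, h6⟩ := G.adj_of_chain A B l hc' hnd p q hh hl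
      exact ⟨F, G', h1, h2, h3, fun v _ _ => h6 v⟩
    · subst heq
      have hnd1 : l1.Nodup := hnd.of_append_left
      have hnd2 : l2.Nodup := hnd.of_append_right
      obtain ⟨z, hz⟩ : ∃ z, l1.getLast? = some z := by
        rcases l1 with _ | ⟨u, l1'⟩
        · exact absurd rfl hl1
        · exact ⟨_, List.getLast?_eq_getLast (by simp)⟩
      obtain ⟨w, hw⟩ : ∃ w, l2.head? = some w := by
        rcases l2 with _ | ⟨u, l2'⟩
        · exact absurd rfl hl2
        · exact ⟨u, rfl⟩
      have hh1 : l1.head? = some p := by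
        rcases l1 with _ | ⟨u, l1'⟩
        · exact absurd rfl hl1
        · simpa using hh
      have hl2' : l2.getLast? = some q := by
        obtain ⟨u, hu⟩ : ∃ u, l2.getLast? = some u := by
          rcases l2 with _ | ⟨a, l2'⟩
          · exact absurd rfl hl2
          · exact ⟨_, List.getLast?_eq_getLast (by simp)⟩
        rw [List.getLast?_append, hu] at hl
        rw [hu]
        simpa using hl
      obtain ⟨F1, G1, hF1, hG1, hd1, hm1F, hm1G, hn1⟩ :=
        G.adj_of_chain A B l1 hc1 hnd1 p z hh1 hz
      obtain ⟨F2, G2, hF2, hG2, hd2, hm2F, hm2G, hn2⟩ :=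
        G.adj_of_chain A B l2 hc2 hnd2 w q hw hl2'
      have hdisjl : ∀ a, a ∈ l1 → a ∈ l2 → False := fun a h1 h2 =>
        (List.disjoint_of_nodup_append hnd) h1 h2
      have hFF : Disjoint F1 F2 := by
        rw [Finset.disjoint_left]
        intro e h1 h2
        exact hdisjl _ (hm1F e h1).1 (hm2F e h2).1
      have hGG : Disjoint G1 G2 := by
        rw [Finset.disjoint_left]
        intro e h1 h2
        exact hdisjl _ (hm1G e h1).1 (hm2G e h2).1
      have hFG12 : Disjoint F1 G2 := by
        rw [Finset.disjoint_left]
        intro e h1 h2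
        exact hdisjl _ (hm1F e h1).1 (hm2G e h2).1
      have hFG21 : Disjoint F2 G1 := by
        rw [Finset.disjoint_left]
        intro e h1 h2
        exact hdisjl _ (hm1G e h2).1 (hm2F e h1).1
      refine ⟨F1 ∪ F2, G1 ∪ G2, Finset.union_subset hF1 hF2, Finset.union_subset hG1 hG2, ?_, ?_⟩
      · rw [Finset.disjoint_union_left]
        constructor
        · rw [Finset.disjoint_union_right]; exact ⟨hd1, hFG12⟩
        · rw [Finset.disjoint_union_right]; exact ⟨hFG21, hd2⟩
      · intro v hvs hvt
        rw [G.netZ_union F1 F2 G1 G2 hFF hGG, hn1 v, hn2 v]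
        have hvz : (if v = z then (1:ℤ) else 0) = 0 := by
          rcases hlast z hz with rfl | rfl
          · simp [hvs]
          · simp [hvt]
        have hvw : (if v = w then (1:ℤ) else 0) = 0 := by
          rcases hhead w hw with rfl | rfl
          · simp [hvs]
          · simp [hvt]
        rw [hvz, hvw]
        ring
  · right
    refine ⟨univ.filter (fun v => Relation.ReflTransGen (G.Step2 s t A B) p v),
      Finset.mem_filter.mpr ⟨Finset.mem_univ _, Relation.ReflTransGen.refl⟩,
      by simp only [Finset.mem_filter, Finset.mem_univ, true_and]; exact hr, ?_, ?_, ?_⟩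
    · constructor
      · intro hs
        simp only [Finset.mem_filter, Finset.mem_univ, true_and] at hs ⊢
        exact hs.tail (Or.inr ⟨Or.inl rfl, Or.inr rfl⟩)
      · intro ht
        simp only [Finset.mem_filter, Finset.mem_univ, true_and] at ht ⊢
        exact ht.tail (Or.inr ⟨Or.inr rfl, Or.inl rfl⟩)
    · intro e heB hs
      simp only [Finset.mem_filter, Finset.mem_univ, true_and] at hs ⊢
      exact hs.tail (Or.inl (Or.inl ⟨e, heB, rfl, rfl⟩))
    · intro e heA ht
      simp only [Finset.mem_filter, Finset.mem_univ, true_and] at ht ⊢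
      exact ht.tail (Or.inl (Or.inr ⟨e, heA, rfl, rfl⟩))


/-- capacitated flow -/
def FlowCap (G : Digraph' V E) (s t : V) (c : E → ℕ) (f : E → ℕ) : Prop :=
  (∀ e, f e ≤ c e) ∧ G.Cons s t f

lemma exists_max_flowcap (G : Digraph' V E) (s t : V) (c : E → ℕ) :
    ∃ h, G.FlowCap s t c h ∧ ∀ h', G.FlowCap s t c h' → G.exc h' s ≤ G.exc h s := by
  classical
  let 𝒮 : Finset (E → ℕ) :=
    (univ : Finset (∀ _ : E, Fin (Finset.univ.sup c + 1))).image (fun g e => (g e : ℕ))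
  let T : Finset (E → ℕ) := 𝒮.filter (fun f => G.FlowCap s t c f)
  have hmem : ∀ f : E → ℕ, G.FlowCap s t c f → f ∈ T := by
    intro f hf
    refine Finset.mem_filter.mpr ⟨?_, hf⟩
    refine Finset.mem_image.mpr ⟨fun e => ⟨f e, ?_⟩, Finset.mem_univ _, rfl⟩
    have h1 : c e ≤ Finset.univ.sup c := Finset.le_sup (Finset.mem_univ e)
    have := hf.1 e
    omega
  have hne : T.Nonempty := by
    refine ⟨fun _ => 0, hmem _ ⟨fun e => Nat.zero_le _, fun v _ _ => ?_⟩⟩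
    exact G.exc_zero v
  obtain ⟨h, hhT, hmax⟩ := T.exists_max_image (fun f => G.exc f s) hne
  exact ⟨h, (Finset.mem_filter.mp hhT).2, fun h' hh' => hmax h' (hmem h' hh')⟩

/-- A maximum capacitated flow admits a saturated cut. -/
lemma maxflow_cut (G : Digraph' V E) {s t : V} (hst : s ≠ t) (c : E → ℕ) (h : E → ℕ)
    (hfc : G.FlowCap s t c h) (hmax : ∀ h', G.FlowCap s t c h' → G.exc h' s ≤ G.exc h s) :
    ∃ S : Finset V, s ∈ S ∧ t ∉ S ∧
      (∀ e ∈ G.outS S, h e = c e) ∧ (∀ e ∈ G.inS S, h e = 0) := by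
  classical
  rcases G.reach_or_cut (univ.filter (fun e => 0 < h e)) (univ.filter (fun e => h e < c e)) s t
    with ⟨F, G', hFB, hGA, hdis, hnet⟩ | ⟨S, hs, ht, hB, hA⟩
  · exfalso
    set h2 : E → ℕ := fun e => h e + ind F e - ind G' e with hh2
    have hG1 : ∀ e ∈ G', 1 ≤ h e := by
      intro e he
      have := hGA he
      simp only [Finset.mem_filter, Finset.mem_univ, true_and] at this
      omega
    have hexc : ∀ v, G.exc h2 v = G.exc h v + G.netZ F G' v := fun v =>
      G.exc_adjust h F G' hG1 hdis v
    have hfc2 : G.FlowCap s t c h2 := by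
      constructor
      · intro e
        by_cases heF : e ∈ F
        · have := hFB heF
          simp only [Finset.mem_filter, Finset.mem_univ, true_and] at this
          have heG : e ∉ G' := Finset.disjoint_left.mp hdis heF
          simp [hh2, ind, heF, heG]
          omega
        · by_cases heG : e ∈ G'
          · have := hfc.1 e
            simp [hh2, ind, heF, heG]
            omega
          · have := hfc.1 e
            simp [hh2, ind, heF, heG]
            omega
      · intro v hvs hvt
        rw [hexc v, hfc.2 v hvs hvt, hnet v, if_neg hvs, if_neg hvt]
        ring
    have hval : G.exc h2 s = G.exc h s + 1 := by
      rw [hexc s, hnet s, if_pos rfl, if_neg hst]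
      ring
    have := hmax h2 hfc2
    omega
  · refine ⟨S, hs, ht, ?_, ?_⟩
    · intro e he
      simp only [outS, Finset.mem_filter, Finset.mem_univ, true_and] at he
      by_cases hlt : h e < c e
      · exact absurd (hB e (by simp [hlt]) he.1) he.2
      · have := hfc.1 e; omega
    · intro e he
      simp only [inS, Finset.mem_filter, Finset.mem_univ, true_and] at he
      by_cases hpos : 0 < h e
      · exact absurd (hA e (by simp [hpos]) he.1) he.2
      · omega


/-- Peel a unit flow off an integer flow with capacities `≤ K`. -/
lemma peel (G : Digraph' V E) {s t : V} (K : ℕ) (hK : 1 ≤ K) (h : E → ℕ)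
    (hcap : ∀ e, h e ≤ K) (hcons : G.Cons s t h) :
    ∃ g : E → ℕ, G.Cons s t g ∧ (∀ e, g e ≤ 1) ∧ (∀ e, g e ≤ h e) ∧
      (∀ e, h e ≤ g e + (K - 1)) := by
  classical
  set U : E → ℕ := fun e => min (h e) 1 with hU
  set L : E → ℕ := fun e => h e - (K - 1) with hL
  have hLU : ∀ e, L e ≤ U e := by
    intro e; have := hcap e; simp only [hU, hL]; omega
  set Φ : (E → ℕ) → ℕ := fun f => ∑ e, ((f e - U e) + (L e - f e)) with hPhi
  -- finite nonempty candidate set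
  let 𝒮 : Finset (E → ℕ) :=
    (univ : Finset (∀ _ : E, Fin (K + 1))).image (fun g e => (g e : ℕ))
  let T : Finset (E → ℕ) := 𝒮.filter (fun f => G.FlowCap s t (fun _ => K) f)
  have hmem : ∀ f : E → ℕ, G.FlowCap s t (fun _ => K) f → f ∈ T := by
    intro f hf
    refine Finset.mem_filter.mpr ⟨?_, hf⟩
    refine Finset.mem_image.mpr ⟨fun e => ⟨f e, Nat.lt_succ_of_le (hf.1 e)⟩, Finset.mem_univ _, rfl⟩
  have hne : T.Nonempty := ⟨h, hmem h ⟨hcap, hcons⟩⟩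
  obtain ⟨g, hgT, hmin⟩ := T.exists_min_image Φ hne
  have hgfc : G.FlowCap s t (fun _ => K) g := (Finset.mem_filter.mp hgT).2
  have hcapg : ∀ e, g e ≤ K := hgfc.1
  have hgood : ∀ e, g e ≤ U e ∧ L e ≤ g e := by
    by_contra hbad
    push_neg at hbad
    obtain ⟨e0, he0⟩ := hbad
    -- we will construct a strictly better flow, contradiction with minimality
    have key : False := by
      rcases Nat.lt_or_ge (U e0) (g e0) with hvU | hvU
      · -- case I : g too big on e0 ; decrease e0, reroute src e0 → tgt e0
        set A : Finset E := univ.filter (fun e => e ≠ e0 ∧ L e < g e) with hA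
        set B : Finset E := univ.filter (fun e => e ≠ e0 ∧ g e < U e) with hB
        rcases G.reach2_or_cut s t A B (G.src e0) (G.tgt e0) with
          ⟨F, G', hFB, hGA, hdis, hnet⟩ | ⟨S, hpS, hqS, hiff, hclB, hclA⟩
        · -- augment
          have he0F : e0 ∉ F := fun hh => by
            have := hFB hh; rw [hB] at this
            simp only [Finset.mem_filter, Finset.mem_univ, true_and] at this
            exact this.1 rfl
          have he0G : e0 ∉ G' := fun hh => by
            have := hGA hh; rw [hA] at this
            simp only [Finset.mem_filter, Finset.mem_univ, true_and] at this
            exact this.1 rfl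
          set g1 : E → ℕ := fun e => g e - ind {e0} e with hg1
          have hsub : ∀ e, ind {e0} e ≤ g e := by
            intro e
            by_cases hh : e = e0
            · subst hh; simp [ind]; omega
            · simp [ind, hh]
          have hg1exc : ∀ v, G.exc g1 v = G.exc g v - G.exc (ind {e0}) v := fun v =>
            G.exc_sub hsub v
          have hG1 : ∀ e ∈ G', 1 ≤ g1 e := by
            intro e he
            have h2 := hGA he; rw [hA] at h2
            simp only [Finset.mem_filter, Finset.mem_univ, true_and] at h2
            simp only [hg1, ind, Finset.mem_singleton, h2.1, if_false]
            omega
          set g2 : E → ℕ := fun e => g1 e + ind F e - ind G' e with hg2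
          have hg2exc : ∀ v, G.exc g2 v = G.exc g1 v + G.netZ F G' v := fun v =>
            G.exc_adjust g1 F G' hG1 hdis v
          have hval : ∀ e, e ≠ e0 → e ∉ F → e ∉ G' → g2 e = g e := by
            intro e h1 h2 h3; simp [hg2, hg1, ind, h1, h2, h3]
          have hvalF : ∀ e ∈ F, g2 e = g e + 1 := by
            intro e he
            have h1 : e ∉ G' := Finset.disjoint_left.mp hdis he
            have h2 : e ≠ e0 := fun hh => he0F (hh ▸ he)
            simp [hg2, hg1, ind, he, h1, h2]
          have hvalG : ∀ e ∈ G', g2 e = g e - 1 := by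
            intro e he
            have h1 : e ∉ F := Finset.disjoint_right.mp hdis he
            have h2 : e ≠ e0 := fun hh => he0G (hh ▸ he)
            simp [hg2, hg1, ind, he, h1, h2]
          have hvale0 : g2 e0 = g e0 - 1 := by
            simp [hg2, hg1, ind, he0F, he0G]
          have hfc2 : G.FlowCap s t (fun _ => K) g2 := by
            constructor
            · intro e
              show g2 e ≤ K
              by_cases h1 : e = e0
              · rw [h1, hvale0]; have := hcapg e0; omega
              · by_cases h2 : e ∈ F
                · rw [hvalF e h2]
                  have h3 := hFB h2; rw [hB] at h3
                  simp only [Finset.mem_filter, Finset.mem_univ, true_and] at h3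
                  have h4 : U e ≤ 1 := min_le_right _ _
                  omega
                · by_cases h3 : e ∈ G'
                  · rw [hvalG e h3]; have := hcapg e; omega
                  · rw [hval e h1 h2 h3]; exact hcapg e
            · intro v hvs hvt
              rw [hg2exc v, hg1exc v, hgfc.2 v hvs hvt, hnet v hvs hvt, G.exc_single,
                ite_eq_comm v (G.src e0), ite_eq_comm v (G.tgt e0)]
              ring
          have hPhilt : Φ g2 < Φ g := by
            refine Finset.sum_lt_sum (fun e _ => ?_) ⟨e0, Finset.mem_univ _, ?_⟩
            · by_cases h1 : e = e0
              · rw [h1, hvale0]; have := hLU e0; omega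
              · by_cases h2 : e ∈ F
                · rw [hvalF e h2]
                  have h3 := hFB h2; rw [hB] at h3
                  simp only [Finset.mem_filter, Finset.mem_univ, true_and] at h3
                  omega
                · by_cases h3 : e ∈ G'
                  · rw [hvalG e h3]
                    have h4 := hGA h3; rw [hA] at h4
                    simp only [Finset.mem_filter, Finset.mem_univ, true_and] at h4
                    omega
                  · rw [hval e h1 h2 h3]
            · rw [hvale0]; have := hLU e0; omega
          exact absurd (hmin g2 (hmem g2 hfc2)) (by omega)
        · -- cut, contradiction
          have he0OS : e0 ∈ G.outS S := by
            simp only [outS, Finset.mem_filter, Finset.mem_univ, true_and]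
            exact ⟨hpS, hqS⟩
          have hgS := G.sum_exc_closed hgfc.2 hiff
          have hhS := G.sum_exc_closed hcons hiff
          rw [G.sum_exc] at hgS hhS
          -- pointwise bounds
          have houtg : ∀ e ∈ (G.outS S).erase e0, (h e : ℤ) ≤ (K : ℤ) * g e := by
            intro e he
            obtain ⟨hne0, heo⟩ := Finset.mem_erase.mp he
            simp only [outS, Finset.mem_filter, Finset.mem_univ, true_and] at heo
            have heB : e ∉ B := fun hh => heo.2 (hclB e hh heo.1)
            rw [hB] at heB
            simp only [Finset.mem_filter, Finset.mem_univ, true_and, not_and, not_lt] at heB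
            have hUg : U e ≤ g e := heB hne0
            by_cases hz : h e = 0
            · rw [hz]; push_cast; positivity
            · have h1 : 1 ≤ g e := by simp [hU] at hUg; omega
              have h2 : (K:ℤ) * 1 ≤ (K:ℤ) * g e := by
                apply mul_le_mul_of_nonneg_left _ (by positivity)
                exact_mod_cast h1
              have h3 : (h e : ℤ) ≤ K := by exact_mod_cast hcap e
              linarith
          have houte0 : (h e0 : ℤ) + K ≤ (K : ℤ) * g e0 := by
            have h1 : U e0 + 1 ≤ g e0 := hvU
            by_cases hz : h e0 = 0
            · have h2 : (1:ℤ) ≤ g e0 := by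
                have : (1:ℕ) ≤ g e0 := by simp [hU, hz] at h1; omega
                exact_mod_cast this
              have h3 : (K:ℤ) * 1 ≤ (K:ℤ) * g e0 :=
                mul_le_mul_of_nonneg_left h2 (by positivity)
              rw [hz]; push_cast; linarith
            · have h2 : (2:ℤ) ≤ g e0 := by
                have : (2:ℕ) ≤ g e0 := by simp [hU] at h1; omega
                exact_mod_cast this
              have h3 : (K:ℤ) * 2 ≤ (K:ℤ) * g e0 :=
                mul_le_mul_of_nonneg_left h2 (by positivity)
              have h4 : (h e0 : ℤ) ≤ K := by exact_mod_cast hcap e0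
              have h5 : (1:ℤ) ≤ K := by exact_mod_cast hK
              linarith
          have hing : ∀ e ∈ G.inS S, (K : ℤ) * g e ≤ (h e : ℤ) := by
            intro e he
            simp only [inS, Finset.mem_filter, Finset.mem_univ, true_and] at he
            have hne0 : e ≠ e0 := fun hh => he.2 (hh ▸ hpS)
            have heA : e ∉ A := fun hh => he.2 (hclA e hh he.1)
            rw [hA] at heA
            simp only [Finset.mem_filter, Finset.mem_univ, true_and, not_and, not_lt] at heA
            have hgL : g e ≤ L e := heA hne0
            by_cases hz : h e ≤ K - 1
            · have : g e = 0 := by simp [hL] at hgL; omega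
              rw [this]; push_cast; simp
            · have h1 : h e = K := by have := hcap e; omega
              have h2 : g e ≤ 1 := by simp [hL, h1] at hgL; omega
              have h3 : (K:ℤ) * g e ≤ (K:ℤ) * 1 := by
                apply mul_le_mul_of_nonneg_left _ (by positivity)
                exact_mod_cast h2
              rw [h1]; push_cast; linarith
          -- combine
          have hsum1 : (∑ e ∈ G.outS S, (h e : ℤ)) + K ≤ ∑ e ∈ G.outS S, (K:ℤ) * g e := by
            rw [← Finset.add_sum_erase _ (fun e => (h e : ℤ)) he0OS,
              ← Finset.add_sum_erase _ (fun e => (K:ℤ) * g e) he0OS]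
            have := Finset.sum_le_sum houtg
            linarith
          have hsum2 : ∑ e ∈ G.inS S, (K:ℤ) * g e ≤ ∑ e ∈ G.inS S, (h e : ℤ) :=
            Finset.sum_le_sum hing
          have hmul : (K:ℤ) * ((∑ e ∈ G.outS S, (g e:ℤ)) - ∑ e ∈ G.inS S, (g e:ℤ))
              = (∑ e ∈ G.outS S, (K:ℤ) * g e) - ∑ e ∈ G.inS S, (K:ℤ) * g e := by
            rw [mul_sub, Finset.mul_sum, Finset.mul_sum]
          have hKpos : (0:ℤ) < K := by exact_mod_cast hK
          rw [hgS, mul_zero] at hmul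
          linarith
      · -- case II : g too small on e0 ; increase e0, reroute tgt e0 → src e0
        have hvL : g e0 < L e0 := by
          rcases he0 (by omega) with h'
          exact h'
        have hhe0 : h e0 = K ∧ L e0 = 1 ∧ g e0 = 0 ∧ U e0 = 1 := by
          have h1 := hcap e0
          have h2 := hLU e0
          simp only [hL, hU] at hvL h2 ⊢
          omega
        set A : Finset E := univ.filter (fun e => e ≠ e0 ∧ L e < g e) with hA
        set B : Finset E := univ.filter (fun e => e ≠ e0 ∧ g e < U e) with hB
        rcases G.reach2_or_cut s t A B (G.tgt e0) (G.src e0) with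
          ⟨F, G', hFB, hGA, hdis, hnet⟩ | ⟨S, hpS, hqS, hiff, hclB, hclA⟩
        · have he0F : e0 ∉ F := fun hh => by
            have := hFB hh; rw [hB] at this
            simp only [Finset.mem_filter, Finset.mem_univ, true_and] at this
            exact this.1 rfl
          have he0G : e0 ∉ G' := fun hh => by
            have := hGA hh; rw [hA] at this
            simp only [Finset.mem_filter, Finset.mem_univ, true_and] at this
            exact this.1 rfl
          set g1 : E → ℕ := fun e => g e + ind {e0} e with hg1
          have hg1exc : ∀ v, G.exc g1 v = G.exc g v + G.exc (ind {e0}) v := fun v =>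
            G.exc_add g (ind {e0}) v
          have hG1 : ∀ e ∈ G', 1 ≤ g1 e := by
            intro e he
            have h2 := hGA he; rw [hA] at h2
            simp only [Finset.mem_filter, Finset.mem_univ, true_and] at h2
            simp only [hg1, ind, Finset.mem_singleton, h2.1, if_false]
            omega
          set g2 : E → ℕ := fun e => g1 e + ind F e - ind G' e with hg2
          have hg2exc : ∀ v, G.exc g2 v = G.exc g1 v + G.netZ F G' v := fun v =>
            G.exc_adjust g1 F G' hG1 hdis v
          have hval : ∀ e, e ≠ e0 → e ∉ F → e ∉ G' → g2 e = g e := by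
            intro e h1 h2 h3; simp [hg2, hg1, ind, h1, h2, h3]
          have hvalF : ∀ e ∈ F, g2 e = g e + 1 := by
            intro e he
            have h1 : e ∉ G' := Finset.disjoint_left.mp hdis he
            have h2 : e ≠ e0 := fun hh => he0F (hh ▸ he)
            simp [hg2, hg1, ind, he, h1, h2]
          have hvalG : ∀ e ∈ G', g2 e = g e - 1 := by
            intro e he
            have h1 : e ∉ F := Finset.disjoint_right.mp hdis he
            have h2 : e ≠ e0 := fun hh => he0G (hh ▸ he)
            simp [hg2, hg1, ind, he, h1, h2]
          have hvale0 : g2 e0 = g e0 + 1 := by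
            simp [hg2, hg1, ind, he0F, he0G]
          have hfc2 : G.FlowCap s t (fun _ => K) g2 := by
            constructor
            · intro e
              show g2 e ≤ K
              by_cases h1 : e = e0
              · rw [h1, hvale0]; omega
              · by_cases h2 : e ∈ F
                · rw [hvalF e h2]
                  have h3 := hFB h2; rw [hB] at h3
                  simp only [Finset.mem_filter, Finset.mem_univ, true_and] at h3
                  have h4 : U e ≤ 1 := min_le_right _ _
                  omega
                · by_cases h3 : e ∈ G'
                  · rw [hvalG e h3]; have := hcapg e; omega
                  · rw [hval e h1 h2 h3]; exact hcapg e
            · intro v hvs hvt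
              rw [hg2exc v, hg1exc v, hgfc.2 v hvs hvt, hnet v hvs hvt, G.exc_single,
                ite_eq_comm v (G.tgt e0), ite_eq_comm v (G.src e0)]
              ring
          have hPhilt : Φ g2 < Φ g := by
            refine Finset.sum_lt_sum (fun e _ => ?_) ⟨e0, Finset.mem_univ _, ?_⟩
            · by_cases h1 : e = e0
              · rw [h1, hvale0]; have := hLU e0; omega
              · by_cases h2 : e ∈ F
                · rw [hvalF e h2]
                  have h3 := hFB h2; rw [hB] at h3
                  simp only [Finset.mem_filter, Finset.mem_univ, true_and] at h3
                  omega
                · by_cases h3 : e ∈ G'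
                  · rw [hvalG e h3]
                    have h4 := hGA h3; rw [hA] at h4
                    simp only [Finset.mem_filter, Finset.mem_univ, true_and] at h4
                    omega
                  · rw [hval e h1 h2 h3]
            · rw [hvale0]; omega
          exact absurd (hmin g2 (hmem g2 hfc2)) (by omega)
        · -- cut
          have he0IS : e0 ∈ G.inS S := by
            simp only [inS, Finset.mem_filter, Finset.mem_univ, true_and]
            exact ⟨hpS, hqS⟩
          have hgS := G.sum_exc_closed hgfc.2 hiff
          have hhS := G.sum_exc_closed hcons hiff
          rw [G.sum_exc] at hgS hhS
          have houtg : ∀ e ∈ G.outS S, (h e : ℤ) ≤ (K : ℤ) * g e := by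
            intro e heo
            simp only [outS, Finset.mem_filter, Finset.mem_univ, true_and] at heo
            have hne0 : e ≠ e0 := fun hh => heo.2 (hh ▸ hpS)
            have heB : e ∉ B := fun hh => heo.2 (hclB e hh heo.1)
            rw [hB] at heB
            simp only [Finset.mem_filter, Finset.mem_univ, true_and, not_and, not_lt] at heB
            have hUg : U e ≤ g e := heB hne0
            by_cases hz : h e = 0
            · rw [hz]; push_cast; positivity
            · have h1 : 1 ≤ g e := by simp [hU] at hUg; omega
              have h2 : (K:ℤ) * 1 ≤ (K:ℤ) * g e := by
                apply mul_le_mul_of_nonneg_left _ (by positivity)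
                exact_mod_cast h1
              have h3 : (h e : ℤ) ≤ K := by exact_mod_cast hcap e
              linarith
          have hing : ∀ e ∈ (G.inS S).erase e0, (K : ℤ) * g e ≤ (h e : ℤ) := by
            intro e he
            obtain ⟨hne0, hei⟩ := Finset.mem_erase.mp he
            simp only [inS, Finset.mem_filter, Finset.mem_univ, true_and] at hei
            have heA : e ∉ A := fun hh => hei.2 (hclA e hh hei.1)
            rw [hA] at heA
            simp only [Finset.mem_filter, Finset.mem_univ, true_and, not_and, not_lt] at heA
            have hgL : g e ≤ L e := heA hne0
            by_cases hz : h e ≤ K - 1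
            · have : g e = 0 := by simp [hL] at hgL; omega
              rw [this]; push_cast; simp
            · have h1 : h e = K := by have := hcap e; omega
              have h2 : g e ≤ 1 := by simp [hL, h1] at hgL; omega
              have h3 : (K:ℤ) * g e ≤ (K:ℤ) * 1 := by
                apply mul_le_mul_of_nonneg_left _ (by positivity)
                exact_mod_cast h2
              rw [h1]; push_cast; linarith
          have hine0 : (K:ℤ) * g e0 + K ≤ (h e0 : ℤ) := by
            rw [hhe0.2.2.1, hhe0.1]; simp
          have hsum1 : ∑ e ∈ G.outS S, (h e : ℤ) ≤ ∑ e ∈ G.outS S, (K:ℤ) * g e :=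
            Finset.sum_le_sum houtg
          have hsum2 : (∑ e ∈ G.inS S, (K:ℤ) * g e) + K ≤ ∑ e ∈ G.inS S, (h e : ℤ) := by
            rw [← Finset.add_sum_erase _ (fun e => (h e : ℤ)) he0IS,
              ← Finset.add_sum_erase _ (fun e => (K:ℤ) * g e) he0IS]
            have := Finset.sum_le_sum hing
            linarith
          have hmul : (K:ℤ) * ((∑ e ∈ G.outS S, (g e:ℤ)) - ∑ e ∈ G.inS S, (g e:ℤ))
              = (∑ e ∈ G.outS S, (K:ℤ) * g e) - ∑ e ∈ G.inS S, (K:ℤ) * g e := by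
            rw [mul_sub, Finset.mul_sum, Finset.mul_sum]
          have hKpos : (0:ℤ) < K := by exact_mod_cast hK
          rw [hgS, mul_zero] at hmul
          linarith
    exact key
  refine ⟨g, hgfc.2, ?_, ?_, ?_⟩
  · intro e; have := (hgood e).1; simp only [hU] at this; omega
  · intro e; have := (hgood e).1; simp only [hU] at this; omega
  · intro e; have := (hgood e).2; simp only [hL] at this; omega


/-- Split an integer flow with capacities ≤ K into K unit flows. -/
lemma split (G : Digraph' V E) {s t : V} :
    ∀ (K : ℕ) (h : E → ℕ), (∀ e, h e ≤ K) → G.Cons s t h →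
    ∃ g : Fin K → E → ℕ, (∀ i, G.Cons s t (g i) ∧ ∀ e, g i e ≤ 1) ∧
      (∀ e, ∑ i, g i e = h e) := by
  intro K
  induction K with
  | zero =>
    intro h hcap hcons
    refine ⟨fun i => i.elim0, fun i => i.elim0, fun e => ?_⟩
    have := hcap e
    simp only [Finset.univ_eq_empty, Finset.sum_empty]
    omega
  | succ K ih =>
    intro h hcap hcons
    obtain ⟨g0, hg0cons, hg0cap, hg0le, hg0ge⟩ :=
      G.peel (K + 1) (Nat.succ_le_succ (Nat.zero_le K)) h hcap hcons
    set h' : E → ℕ := fun e => h e - g0 e with hh'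
    have hcap' : ∀ e, h' e ≤ K := by
      intro e
      have h1 := hg0ge e
      simp only [Nat.add_sub_cancel] at h1
      simp only [hh']
      omega
    have hcons' : G.Cons s t h' := by
      intro v hvs hvt
      have := G.exc_sub hg0le v
      simp only [hh']
      rw [this, hcons v hvs hvt, hg0cons v hvs hvt]
      ring
    obtain ⟨gs, hgs1, hgs2⟩ := ih h' hcap' hcons'
    refine ⟨Fin.cons g0 gs, ?_, ?_⟩
    · intro i
      refine Fin.cases ?_ ?_ i
      · simpa using ⟨hg0cons, hg0cap⟩
      · intro j; simpa using hgs1 j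
    · intro e
      rw [Fin.sum_univ_succ]
      simp only [Fin.cons_zero, Fin.cons_succ]
      rw [hgs2 e]
      have := hg0le e
      simp only [hh']
      omega

/-- Extract `m` disjoint path indicators from a unit flow of value `m`. -/
lemma extract (G : Digraph' V E) {s t : V} (hst : s ≠ t) :
    ∀ (m : ℕ) (f : E → ℕ), G.Cons s t f → (∀ e, f e ≤ 1) → G.exc f s = m →
    ∃ P : Fin m → Finset E,
      (∀ i v, G.exc (ind (P i)) v = (if v = s then 1 else 0) - (if v = t then 1 else 0)) ∧
      (∀ i j, i ≠ j → Disjoint (P i) (P j)) ∧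
      (∀ i, ∀ e ∈ P i, f e = 1) := by
  intro m
  induction m with
  | zero =>
    intro f _ _ _
    exact ⟨fun i => i.elim0, fun i => i.elim0, fun i j _ => i.elim0, fun i => i.elim0⟩
  | succ m ih =>
    intro f hcons hcap hval
    rcases G.reach_or_cut ∅ (univ.filter (fun e => 1 ≤ f e)) s t with
      ⟨F, G', hFB, hGA, hdis, hnet⟩ | ⟨S, hs, ht, hB, _⟩
    · have hG' : G' = ∅ := Finset.subset_empty.mp hGA
      subst hG'
      have hnet' : ∀ v, G.exc (ind F) v
          = (if v = s then 1 else 0) - (if v = t then 1 else 0) := by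
        intro v
        have h1 := hnet v
        unfold netZ at h1
        have h2 : G.exc (ind (∅ : Finset E)) v = 0 := by
          have : ind (∅ : Finset E) = fun _ => 0 := by funext e; simp [ind]
          rw [this]; exact G.exc_zero v
        rw [h2] at h1
        linarith
      have hFf : ∀ e ∈ F, f e = 1 := by
        intro e he
        have h1 := hFB he
        simp only [Finset.mem_filter, Finset.mem_univ, true_and] at h1
        have := hcap e
        omega
      have hsub : ∀ e, ind F e ≤ f e := by
        intro e
        by_cases he : e ∈ F
        · rw [hFf e he]; simp [ind, he]
        · simp [ind, he]
      set f' : E → ℕ := fun e => f e - ind F e with hf'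
      have hcons' : G.Cons s t f' := by
        intro v hvs hvt
        simp only [hf']
        rw [G.exc_sub hsub v, hcons v hvs hvt, hnet' v, if_neg hvs, if_neg hvt]
        ring
      have hcap' : ∀ e, f' e ≤ 1 := by
        intro e; simp only [hf']; have := hcap e; omega
      have hval' : G.exc f' s = m := by
        simp only [hf']
        rw [G.exc_sub hsub s, hval, hnet' s, if_pos rfl, if_neg hst]
        push_cast; ring
      obtain ⟨P', hP1, hP2, hP3⟩ := ih f' hcons' hcap' hval'
      have hF0 : ∀ e ∈ F, f' e = 0 := by
        intro e he
        simp only [hf']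
        rw [hFf e he]; simp [ind, he]
      refine ⟨Fin.cons F P', ?_, ?_, ?_⟩
      · intro i
        refine Fin.cases ?_ ?_ i
        · simpa using hnet'
        · intro j; simpa using hP1 j
      · intro i j
        refine Fin.cases (motive := fun i => i ≠ j →
          Disjoint ((Fin.cons F P' : Fin (m+1) → Finset E) i) ((Fin.cons F P' : Fin (m+1) → Finset E) j)) ?_ ?_ i
        · refine Fin.cases (motive := fun j => (0 : Fin (m+1)) ≠ j →
            Disjoint ((Fin.cons F P' : Fin (m+1) → Finset E) 0) ((Fin.cons F P' : Fin (m+1) → Finset E) j)) ?_ ?_ j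
          · intro h; exact absurd rfl h
          · intro j' _
            simp only [Fin.cons_zero, Fin.cons_succ]
            rw [Finset.disjoint_left]
            intro e heF heP
            have h1 := hP3 j' e heP
            have h2 := hF0 e heF
            omega
        · intro i'
          refine Fin.cases (motive := fun j => Fin.succ i' ≠ j →
            Disjoint ((Fin.cons F P' : Fin (m+1) → Finset E) (Fin.succ i')) ((Fin.cons F P' : Fin (m+1) → Finset E) j)) ?_ ?_ j
          · intro _
            simp only [Fin.cons_zero, Fin.cons_succ]
            rw [Finset.disjoint_right]
            intro e heF heP
            have h1 := hP3 i' e heP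
            have h2 := hF0 e heF
            omega
          · intro j' hij'
            simp only [Fin.cons_succ]
            exact hP2 i' j' (fun h => hij' (congrArg Fin.succ h))
      · intro i
        refine Fin.cases ?_ ?_ i
        · simpa using hFf
        · intro i'
          simp only [Fin.cons_succ]
          intro e he
          have h1 := hP3 i' e he
          simp only [hf'] at h1
          have := hsub e
          have := hcap e
          omega
    · exfalso
      have h1 : ∑ v ∈ S, G.exc f v = G.exc f s := G.sum_exc_st hcons hs ht
      rw [G.sum_exc] at h1
      have hout0 : ∀ e ∈ G.outS S, f e = 0 := by
        intro e he
        simp only [outS, Finset.mem_filter, Finset.mem_univ, true_and] at he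
        by_cases hf1 : 1 ≤ f e
        · exact absurd (hB e (by simp [hf1]) he.1) he.2
        · omega
      have h2 : ∑ e ∈ G.outS S, (f e : ℤ) = 0 :=
        Finset.sum_eq_zero fun e he => by rw [hout0 e he]; simp
      have h3 : (0:ℤ) ≤ ∑ e ∈ G.inS S, (f e : ℤ) :=
        Finset.sum_nonneg fun e _ => by positivity
      rw [h2, hval] at h1
      have : ((m:ℤ) + 1) ≤ 0 := by push_cast at h1 ⊢; linarith
      omega


lemma exc_sum (G : Digraph' V E) {ι : Type} (sᵢ : Finset ι) (g : ι → E → ℕ) (v : V) :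
    G.exc (fun e => ∑ i ∈ sᵢ, g i e) v = ∑ i ∈ sᵢ, G.exc (g i) v := by
  induction sᵢ using Finset.cons_induction with
  | empty => simpa using G.exc_zero v
  | cons i s hi ih =>
    rw [Finset.sum_cons]
    have : (fun e => ∑ j ∈ Finset.cons i s hi, g j e)
        = fun e => g i e + ∑ j ∈ s, g j e := by
      funext e; rw [Finset.sum_cons]
    rw [this, G.exc_add, ih]

end Digraph'

theorem stmt1' {V E : Type} [Fintype V] [DecidableEq V] [Fintype E] [DecidableEq E]
    (G : Digraph' V E) (s t : V) (hst : s ≠ t) (lam : ℕ)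
    (hmax : G.IsMaxFlowValue s t ∅ lam) :
    ∃ B : Fin (2 * lam + 1) → E → ℕ,
      (∀ i, G.IsFlow s t (B i)) ∧
      ∀ e : E, ∃ i, B i e = 0 ∧
        G.IsMaxFlowValue s t {e} (G.flowValue s (B i)) := by
  classical
  open Digraph' in
  obtain ⟨⟨f0, hf0flow, _, hf0val⟩, hub⟩ := hmax
  have hub' : ∀ f, G.IsFlow s t f → G.flowValue s f ≤ lam := fun f hf =>
    hub f hf (by simp)
  have hf0cons : G.Cons s t f0 := Digraph'.conserves_iff_cons.mp hf0flow.2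
  set Tight : E → Prop :=
    fun e => ∀ g, G.IsFlow s t g → G.flowValue s g = lam → g e = 1 with hTight
  -- path decomposition of a max flow
  obtain ⟨P, hP1, hP2, hP3⟩ := G.extract hst lam f0 hf0cons hf0flow.1
    (by rw [← Digraph'.flowValue_eq_exc]; exact hf0val)
  set f2 : E → ℕ := fun e => (univ.filter (fun i : Fin lam => e ∈ P i)).card with hf2
  have hf2sum : f2 = fun e => ∑ i, Digraph'.ind (P i) e := by
    funext e
    show (univ.filter (fun i : Fin lam => e ∈ P i)).card = ∑ i, Digraph'.ind (P i) e
    rw [Finset.card_filter]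
    exact Finset.sum_congr rfl fun i _ => rfl
  have hf2cap : ∀ e, f2 e ≤ 1 := by
    intro e
    rw [hf2]
    refine Finset.card_le_one.mpr ?_
    intro i hi j hj
    by_contra hij
    simp only [Finset.mem_filter, Finset.mem_univ, true_and] at hi hj
    exact (Finset.disjoint_left.mp (hP2 i j hij) hi) hj
  have hexcf2 : ∀ v, G.exc f2 v
      = (lam : ℤ) * ((if v = s then 1 else 0) - (if v = t then 1 else 0)) := by
    intro v
    rw [hf2sum, G.exc_sum]
    rw [Finset.sum_congr rfl (fun i _ => hP1 i v)]
    simp [mul_comm]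
    split_ifs <;> simp
  have hf2cons : G.Cons s t f2 := by
    intro v hvs hvt
    rw [hexcf2 v, if_neg hvs, if_neg hvt]
    ring
  have hf2val : G.exc f2 s = lam := by
    rw [hexcf2 s, if_pos rfl, if_neg hst]
    ring
  have hf2flow : G.IsFlow s t f2 := ⟨hf2cap, Digraph'.conserves_iff_cons.mpr hf2cons⟩
  have hindle : ∀ (i : Fin lam) e, Digraph'.ind (P i) e ≤ f2 e := by
    intro i e
    by_cases he : e ∈ P i
    · have : i ∈ univ.filter (fun j : Fin lam => e ∈ P j) := by
        simp [he]
      have h1 : 1 ≤ f2 e := by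
        rw [hf2]
        exact Finset.card_pos.mpr ⟨i, this⟩
      simpa [Digraph'.ind, he] using h1
    · simp [Digraph'.ind, he]
  set d : Fin lam → E → ℕ := fun i e => f2 e - Digraph'.ind (P i) e with hd
  have hdcons : ∀ i, G.Cons s t (d i) := by
    intro i v hvs hvt
    simp only [hd]
    rw [G.exc_sub (hindle i) v, hf2cons v hvs hvt, hP1 i v, if_neg hvs, if_neg hvt]
    ring
  have hdcap : ∀ i e, d i e ≤ 1 := by
    intro i e
    have := hf2cap e
    simp only [hd]
    omega
  have hdflow : ∀ i, G.IsFlow s t (d i) :=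
    fun i => ⟨hdcap i, Digraph'.conserves_iff_cons.mpr (hdcons i)⟩
  have hdval : ∀ i, G.flowValue s (d i) = (lam : ℤ) - 1 := by
    intro i
    rw [Digraph'.flowValue_eq_exc]
    simp only [hd]
    rw [G.exc_sub (hindle i) s, hf2val, hP1 i s, if_pos rfl, if_neg hst]
    ring
  have hdzero : ∀ (i : Fin lam), ∀ e ∈ P i, d i e = 0 := by
    intro i e he
    have h1 := hindle i e
    have h2 := hf2cap e
    simp only [hd, Digraph'.ind, he, if_true] at h1 ⊢
    omega
  have htp : ∀ e, Tight e → ∃ i, e ∈ P i := by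
    intro e hte
    have h1 : f2 e = 1 := hte f2 hf2flow (by rw [Digraph'.flowValue_eq_exc]; exact hf2val)
    have h1' : (univ.filter (fun i : Fin lam => e ∈ P i)).card = 1 := h1
    have h2 : (univ.filter (fun i : Fin lam => e ∈ P i)).Nonempty :=
      Finset.card_pos.mp (by omega)
    obtain ⟨i, hi⟩ := h2
    simp only [Finset.mem_filter, Finset.mem_univ, true_and] at hi
    exact ⟨i, hi⟩
  -- capacities and the large flow
  set c : E → ℕ := fun e => if Tight e then lam + 1 else lam with hc
  obtain ⟨h, hhfc, hhmax⟩ := G.exists_max_flowcap s t c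
  obtain ⟨S, hsS, htS, hsat, hzero⟩ := G.maxflow_cut hst c h hhfc hhmax
  -- value of h is at least lam*(lam+1)
  have hcross : ∀ (g : E → ℕ), G.IsFlow s t g → G.flowValue s g = lam →
      (∑ e ∈ G.outS S, (g e : ℤ)) - (∑ e ∈ G.inS S, (g e : ℤ)) = lam := by
    intro g hgflow hgval
    have hgcons := Digraph'.conserves_iff_cons.mp hgflow.2
    have h1 := G.sum_exc_st hgcons hsS htS
    rw [G.sum_exc] at h1
    rw [h1, ← Digraph'.flowValue_eq_exc, hgval]
  have hcardlow : lam ≤ (G.outS S).card := by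
    have h1 := hcross f2 hf2flow (by rw [Digraph'.flowValue_eq_exc]; exact hf2val)
    have h2 : ∑ e ∈ G.outS S, (f2 e : ℤ) ≤ (G.outS S).card := by
      calc ∑ e ∈ G.outS S, (f2 e : ℤ) ≤ ∑ _e ∈ G.outS S, (1:ℤ) :=
            Finset.sum_le_sum fun e _ => by exact_mod_cast hf2cap e
        _ = (G.outS S).card := by simp
    have h3 : (0:ℤ) ≤ ∑ e ∈ G.inS S, (f2 e : ℤ) :=
      Finset.sum_nonneg fun e _ => by positivity
    have : (lam : ℤ) ≤ (G.outS S).card := by linarith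
    exact_mod_cast this
  have hsumc : (lam : ℤ) * (lam + 1) ≤ ∑ e ∈ G.outS S, (c e : ℤ) := by
    rcases Nat.lt_or_ge lam (G.outS S).card with hcard | hcard
    · -- many edges, each capacity ≥ lam
      have h1 : ∀ e ∈ G.outS S, (lam : ℤ) ≤ (c e : ℤ) := by
        intro e _
        simp only [hc]
        split <;> simp
      calc (lam : ℤ) * (lam + 1) ≤ (lam : ℤ) * (G.outS S).card := by
            have : (lam:ℤ) + 1 ≤ (G.outS S).card := by exact_mod_cast hcard
            have hl : (0:ℤ) ≤ lam := by positivity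
            nlinarith
        _ = ∑ _e ∈ G.outS S, (lam : ℤ) := by rw [Finset.sum_const]; push_cast; ring
        _ ≤ ∑ e ∈ G.outS S, (c e : ℤ) := Finset.sum_le_sum h1
    · -- exactly lam edges, all tight
      have hcardeq : (G.outS S).card = lam := le_antisymm hcard hcardlow
      have htight : ∀ e ∈ G.outS S, Tight e := by
        intro e heO
        intro g hgflow hgval
        have h1 := hcross g hgflow hgval
        have h3 : (0:ℤ) ≤ ∑ e ∈ G.inS S, (g e : ℤ) :=
          Finset.sum_nonneg fun e _ => by positivity
        by_contra hge
        have hge0 : g e = 0 := by have := hgflow.1 e; omega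
        have h4 : ∑ e' ∈ G.outS S, (g e' : ℤ) ≤ (lam : ℤ) - 1 := by
          rw [← Finset.add_sum_erase _ (fun e' => (g e' : ℤ)) heO]
          have h5 : ∑ e' ∈ (G.outS S).erase e, (g e' : ℤ)
              ≤ ∑ _e' ∈ (G.outS S).erase e, (1:ℤ) :=
            Finset.sum_le_sum fun e' _ => by exact_mod_cast hgflow.1 e'
          have hlam1 : 1 ≤ lam := by
            have := Finset.card_pos.mpr ⟨e, heO⟩
            omega
          have h6 : (((G.outS S).erase e).card : ℤ) = (lam : ℤ) - 1 := by
            have hc1 : ((G.outS S).erase e).card = lam - 1 := by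
              rw [Finset.card_erase_of_mem heO, hcardeq]
            rw [hc1]
            push_cast [Nat.cast_sub hlam1]
            ring
          rw [hge0]
          have h5' : ∑ e' ∈ (G.outS S).erase e, (g e' : ℤ) ≤ (lam : ℤ) - 1 := by
            calc ∑ e' ∈ (G.outS S).erase e, (g e' : ℤ)
                ≤ ∑ _e' ∈ (G.outS S).erase e, (1:ℤ) := h5
              _ = (((G.outS S).erase e).card : ℤ) := by simp
              _ = (lam : ℤ) - 1 := h6
          push_cast
          linarith
        linarith
      calc (lam : ℤ) * (lam + 1) = ∑ _e ∈ G.outS S, ((lam : ℤ) + 1) := by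
            rw [Finset.sum_const, hcardeq]; push_cast; ring
        _ = ∑ e ∈ G.outS S, (c e : ℤ) := by
            refine Finset.sum_congr rfl fun e he => ?_
            simp only [hc]
            rw [if_pos (htight e he)]
            push_cast; ring
        _ ≤ ∑ e ∈ G.outS S, (c e : ℤ) := le_rfl
  have hvalh : (lam : ℤ) * (lam + 1) ≤ G.exc h s := by
    have h1 := G.sum_exc_st hhfc.2 hsS htS
    rw [G.sum_exc] at h1
    have h2 : ∑ e ∈ G.outS S, (h e : ℤ) = ∑ e ∈ G.outS S, (c e : ℤ) :=
      Finset.sum_congr rfl fun e he => by rw [hsat e he]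
    have h3 : ∑ e ∈ G.inS S, (h e : ℤ) = 0 :=
      Finset.sum_eq_zero fun e he => by rw [hzero e he]; simp
    rw [h2, h3] at h1
    linarith
  -- split into lam+1 unit flows
  have hhcap : ∀ e, h e ≤ lam + 1 := by
    intro e
    have h1 := hhfc.1 e
    have h2 : c e ≤ lam + 1 := by simp only [hc]; split <;> omega
    omega
  obtain ⟨gs, hgs1, hgs2⟩ := G.split (lam + 1) h hhcap hhfc.2
  have hgsflow : ∀ i, G.IsFlow s t (gs i) :=
    fun i => ⟨(hgs1 i).2, Digraph'.conserves_iff_cons.mpr (hgs1 i).1⟩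
  have hsumval : ∑ i, G.exc (gs i) s = G.exc h s := by
    rw [← G.exc_sum]
    congr 1
    funext e
    exact hgs2 e
  have hval_each : ∀ i, G.flowValue s (gs i) = lam := by
    by_contra hbad
    push_neg at hbad
    obtain ⟨j, hj⟩ := hbad
    have hjlt : G.exc (gs j) s < lam := by
      have h1 := hub' (gs j) (hgsflow j)
      rw [Digraph'.flowValue_eq_exc] at h1 hj
      omega
    have h2 : ∑ i, G.exc (gs i) s < ∑ _i : Fin (lam + 1), (lam : ℤ) := by
      refine Finset.sum_lt_sum (fun i _ => ?_) ⟨j, Finset.mem_univ _, hjlt⟩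
      have h1 := hub' (gs i) (hgsflow i)
      rw [Digraph'.flowValue_eq_exc] at h1
      exact h1
    rw [hsumval] at h2
    have h4 : ∑ _i : Fin (lam+1), (lam:ℤ) = ((lam:ℤ) + 1) * lam := by
      rw [Finset.sum_const]
      simp only [Finset.card_univ, Fintype.card_fin, smul_eq_mul]
      push_cast; ring
    rw [h4] at h2
    have h5 : ((lam:ℤ) + 1) * lam = (lam:ℤ) * ((lam:ℤ) + 1) := by ring
    linarith [hvalh, h2, h5]
  -- the family
  refine ⟨fun i => if hi : (i : ℕ) < lam then d ⟨i, hi⟩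
    else gs ⟨(i : ℕ) - lam, by omega⟩, ?_, ?_⟩
  · intro i
    dsimp only
    by_cases hi : (i : ℕ) < lam
    · rw [dif_pos hi]; exact hdflow _
    · rw [dif_neg hi]; exact hgsflow _
  · intro e
    by_cases hte : Tight e
    · -- tight edge : use d i for the path containing it
      obtain ⟨i, hi⟩ := htp e hte
      have hilt : i.1 < 2 * lam + 1 := by omega
      refine ⟨⟨i.1, hilt⟩, ?_, ?_⟩
      · dsimp only
        rw [dif_pos (show ((⟨i.1, hilt⟩ : Fin (2*lam+1)) : ℕ) < lam from i.2)]
        have heq : (⟨((⟨i.1, hilt⟩ : Fin (2*lam+1)) : ℕ), i.2⟩ : Fin lam) = i := Fin.ext rfl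
        rw [heq]
        exact hdzero i e hi
      · dsimp only
        rw [dif_pos (show ((⟨i.1, hilt⟩ : Fin (2*lam+1)) : ℕ) < lam from i.2)]
        have heq : (⟨((⟨i.1, hilt⟩ : Fin (2*lam+1)) : ℕ), i.2⟩ : Fin lam) = i := Fin.ext rfl
        rw [heq, hdval i]
        constructor
        · refine ⟨d i, hdflow i, ?_, hdval i⟩
          intro e' he'
          rw [Finset.mem_singleton.mp he']
          exact hdzero i e hi
        · intro f hf hfe
          have h1 := hub' f hf
          by_cases h2 : G.flowValue s f = lam
          · exfalso
            have h3 := hte f hf h2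
            have h4 := hfe e (Finset.mem_singleton_self e)
            omega
          · omega
    · -- non-tight edge : some gs i avoids it
      have hce : c e = lam := by simp only [hc]; rw [if_neg hte]
      have hex : ∃ i : Fin (lam + 1), gs i e = 0 := by
        by_contra hall
        push_neg at hall
        have h1 : ∀ i : Fin (lam + 1), 1 ≤ gs i e := fun i => by
          have := hall i; omega
        have h2 : (lam + 1 : ℕ) ≤ ∑ i, gs i e := by
          calc (lam + 1 : ℕ) = ∑ _i : Fin (lam + 1), 1 := by simp
            _ ≤ ∑ i, gs i e := Finset.sum_le_sum fun i _ => h1 i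
        rw [hgs2 e] at h2
        have h3 := hhfc.1 e
        rw [hce] at h3
        omega
      obtain ⟨i, hi⟩ := hex
      have hilt : lam + i.1 < 2 * lam + 1 := by omega
      have hnl : ¬ ((⟨lam + i.1, hilt⟩ : Fin (2*lam+1)) : ℕ) < lam := by simp
      refine ⟨⟨lam + i.1, hilt⟩, ?_, ?_⟩
      · dsimp only
        rw [dif_neg hnl]
        have heq : (⟨((⟨lam + i.1, hilt⟩ : Fin (2*lam+1)) : ℕ) - lam, by omega⟩
            : Fin (lam + 1)) = i := Fin.ext (by simp)
        rw [heq]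
        exact hi
      · dsimp only
        rw [dif_neg hnl]
        have heq : (⟨((⟨lam + i.1, hilt⟩ : Fin (2*lam+1)) : ℕ) - lam, by omega⟩
            : Fin (lam + 1)) = i := Fin.ext (by simp)
        rw [heq, hval_each i]
        constructor
        · refine ⟨gs i, hgsflow i, ?_, hval_each i⟩
          intro e' he'
          rw [Finset.mem_singleton.mp he']
          exact hi
        · intro f hf _
          exact hub' f hf

/-- If `λ` is the value of a maximum `(s,t)`-flow of `G`, then there
exists a family `B` of `2λ+1` `(s,t)`-flows of `G` such that for every edge `e`,
`B` contains a flow `f` with `f e = 0` whose value equals the maximum `(s,t)`-flow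
value of `G − e` (i.e. `B` contains a maximum `(s,t)`-flow of `G − e`). -/
theorem stmt1 {V E : Type} [Fintype V] [DecidableEq V] [Fintype E] [DecidableEq E]
    (G : Digraph' V E) (s t : V) (hst : s ≠ t) (lam : ℕ)
    (hmax : G.IsMaxFlowValue s t ∅ lam) :
    ∃ B : Fin (2 * lam + 1) → E → ℕ,
      (∀ i, G.IsFlow s t (B i)) ∧
      ∀ e : E, ∃ i, B i e = 0 ∧
        G.IsMaxFlowValue s t {e} (G.flowValue s (B i)) := by
  exact stmt1' G s t hst lam hmax
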